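/- arXiv:2206.13126 — 2 statements merged into one kernel-verified Lean document; each statement's English description precedes it below -/
import Mathlib

section
/- Let G be a graph and w a vertex of G of degree less than q. If all proper q-colourings of G \ w are Kempe equivalent, then all proper q-colourings of G are Kempe equivalent. -/
open SimpleGraph

variable {V : Type*}

/-- Topological embedding of a simple graph in a space `S`. -/
def SimpleGraph.EmbedsIn (G : SimpleGraph V) (S : Type*) [TopologicalSpace S] : Prop :=
  ∃ (φ : V → S) (γ : ∀ u v, G.Adj u v → _root_.Path (φ u) (φ v)),
    Function.Injective φ ∧
    (∀ u v (h : G.Adj u v), Function.Injective (γ u v h : unitInterval → S)) ∧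
    (∀ u v (h : G.Adj u v), γ v u h.symm = (γ u v h).symm) ∧
    (∀ u v (h : G.Adj u v) (t : unitInterval),
        (γ u v h) t ∈ Set.range φ → t = 0 ∨ t = 1) ∧
    (∀ u v u' v' (h : G.Adj u v) (h' : G.Adj u' v') (t₁ t₂ : unitInterval),
        s(u, v) ≠ s(u', v') → (γ u v h) t₁ = (γ u' v' h') t₂ →
        (γ u v h) t₁ ∈ Set.range φ)

/-- The 2-sphere. -/
abbrev Sphere2 : Type := Metric.sphere (0 : EuclideanSpace ℝ (Fin 3)) 1

/-- The torus. -/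
abbrev Torus2 : Type := AddCircle (1 : ℝ) × AddCircle (1 : ℝ)

/-- `G` is `d`-degenerate: every nonempty (induced) subgraph has a vertex
of degree at most `d`. -/
def SimpleGraph.IsDegenerate (G : SimpleGraph V) (d : ℕ) : Prop :=
  ∀ s : Set V, s.Nonempty → ∃ v ∈ s, ({u ∈ s | G.Adj v u}).ncard ≤ d

/-- A proper colouring with `q` colours. -/
def SimpleGraph.IsProperColoring (G : SimpleGraph V) {q : ℕ} (c : V → Fin q) : Prop :=
  ∀ ⦃u v⦄, G.Adj u v → c u ≠ c v

/-- The subgraph of `G` induced by the vertices coloured `a` or `b`. -/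
def SimpleGraph.kempeGraph (G : SimpleGraph V) {q : ℕ} (c : V → Fin q) (a b : Fin q) :
    SimpleGraph V :=
  SimpleGraph.fromRel fun u v => G.Adj u v ∧ (c u = a ∨ c u = b) ∧ (c v = a ∨ c v = b)

/-- A Kempe move: swap colours `a` and `b` on the connected component of `v₀`
in the subgraph induced by the vertices coloured `a` or `b`. -/
def SimpleGraph.KempeStep (G : SimpleGraph V) {q : ℕ} (c₁ c₂ : V → Fin q) : Prop :=
  ∃ (a b : Fin q) (v₀ : V),
    (∀ v, (G.kempeGraph c₁ a b).Reachable v₀ v → c₂ v = Equiv.swap a b (c₁ v)) ∧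
    (∀ v, ¬ (G.kempeGraph c₁ a b).Reachable v₀ v → c₂ v = c₁ v)

/-- Kempe equivalence: a finite sequence of Kempe moves. -/
def SimpleGraph.KempeEquiv (G : SimpleGraph V) {q : ℕ} (c₁ c₂ : V → Fin q) : Prop :=
  Relation.ReflTransGen (G.KempeStep) c₁ c₂

lemma kempeGraph_adj' {V : Type*} {G : SimpleGraph V} {q : ℕ} {c : V → Fin q} {a b : Fin q}
    {u v : V} (h : (G.kempeGraph c a b).Adj u v) :
    G.Adj u v ∧ (c u = a ∨ c u = b) ∧ (c v = a ∨ c v = b) := by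
  simp only [SimpleGraph.kempeGraph, SimpleGraph.fromRel_adj] at h
  obtain ⟨-, h | h⟩ := h
  exacts [⟨h.1, h.2.1, h.2.2⟩, ⟨h.1.symm, h.2.2, h.2.1⟩]

lemma kempeGraph_adj_mk {V : Type*} {G : SimpleGraph V} {q : ℕ} {c : V → Fin q} {a b : Fin q}
    {u v : V} (h : G.Adj u v) (h1 : c u = a ∨ c u = b) (h2 : c v = a ∨ c v = b) :
    (G.kempeGraph c a b).Adj u v := by
  simp only [SimpleGraph.kempeGraph, SimpleGraph.fromRel_adj]
  exact ⟨h.ne, Or.inl ⟨h, h1, h2⟩⟩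

lemma kempe_induce_adj {V : Type*} (G : SimpleGraph V) {q : ℕ} (D : V → Fin q)
    (a b : Fin q) (S : Set V) (u v : S) :
    ((G.induce S).kempeGraph (fun x => D ↑x) a b).Adj u v ↔
      (G.kempeGraph D a b).Adj ↑u ↑v := by
  simp only [SimpleGraph.kempeGraph, SimpleGraph.fromRel_adj, SimpleGraph.comap_adj,
    SimpleGraph.comap_adj, ne_eq, Subtype.ext_iff, Function.Embedding.coe_subtype]

lemma kempe_induce_reach {V : Type*} (G : SimpleGraph V) {q : ℕ} (D : V → Fin q)
    (a b : Fin q) (S : Set V) {u v : S}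
    (h : ((G.induce S).kempeGraph (fun x => D ↑x) a b).Reachable u v) :
    (G.kempeGraph D a b).Reachable ↑u ↑v :=
  h.map ⟨Subtype.val, fun hxy => (kempe_induce_adj G D a b S _ _).1 hxy⟩

lemma reach_eq_of_isolated {W : Type*} {H : SimpleGraph W} {w v : W}
    (hiso : ∀ u, ¬ H.Adj w u) (h : H.Reachable w v) : v = w := by
  rw [SimpleGraph.reachable_iff_reflTransGen] at h
  induction h with
  | refl => rfl
  | tail hab hbc ih => exact absurd (ih ▸ hbc) (hiso _)

lemma kempe_change_at {V : Type*} [DecidableEq V] (G : SimpleGraph V) (w : V) {q : ℕ}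
    (D : V → Fin q) (y : Fin q)
    (hw : ∀ u, G.Adj w u → D u ≠ D w) (hy : ∀ u, G.Adj w u → D u ≠ y) :
    Relation.ReflTransGen G.KempeStep D (Function.update D w y) := by
  rcases eq_or_ne y (D w) with rfl | hne
  · rw [Function.update_eq_self]
  · have hiso : ∀ v, ¬ (G.kempeGraph D (D w) y).Adj w v := by
      intro v hv
      obtain ⟨hg, -, hvc⟩ := kempeGraph_adj' hv
      rcases hvc with h | h
      exacts [hw v hg h, hy v hg h]
    refine Relation.ReflTransGen.single ⟨D w, y, w, ?_, ?_⟩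
    · intro v hv
      have hvw : v = w := reach_eq_of_isolated hiso hv
      subst hvw
      rw [Function.update_self, Equiv.swap_apply_left]
    · intro v hv
      have hvw : v ≠ w := by rintro rfl; exact hv (SimpleGraph.Reachable.refl _)
      rw [Function.update_of_ne hvw]

lemma kempe_proper_step {V : Type*} (G : SimpleGraph V) {q : ℕ} {c₁ c₂ : V → Fin q}
    (h1 : G.IsProperColoring c₁) (hs : G.KempeStep c₁ c₂) : G.IsProperColoring c₂ := by
  obtain ⟨a, b, v₀, hr, hnr⟩ := hs
  have key : ∀ u v, G.Adj u v → (G.kempeGraph c₁ a b).Reachable v₀ u →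
      ¬ (G.kempeGraph c₁ a b).Reachable v₀ v → c₂ u ≠ c₂ v := by
    intro u v huv hu hv heq
    rw [hr u hu, hnr v hv] at heq
    rcases eq_or_ne (c₁ u) a with ha | ha
    · rw [ha, Equiv.swap_apply_left] at heq
      exact hv (hu.trans (SimpleGraph.Adj.reachable
        (kempeGraph_adj_mk huv (Or.inl ha) (Or.inr heq.symm))))
    · rcases eq_or_ne (c₁ u) b with hb | hb
      · rw [hb, Equiv.swap_apply_right] at heq
        exact hv (hu.trans (SimpleGraph.Adj.reachable
          (kempeGraph_adj_mk huv (Or.inr hb) (Or.inl heq.symm))))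
      · rw [Equiv.swap_apply_of_ne_of_ne ha hb] at heq
        exact h1 huv heq
  intro u v huv heq
  by_cases hu : (G.kempeGraph c₁ a b).Reachable v₀ u <;>
    by_cases hv : (G.kempeGraph c₁ a b).Reachable v₀ v
  · rw [hr u hu, hr v hv] at heq
    exact h1 huv ((Equiv.swap a b).injective heq)
  · exact key u v huv hu hv heq
  · exact key v u huv.symm hv hu heq.symm
  · rw [hnr u hu, hnr v hv] at heq; exact h1 huv heq

lemma kempe_proper_equiv {V : Type*} (G : SimpleGraph V) {q : ℕ} {c₁ c₂ : V → Fin q}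
    (h1 : G.IsProperColoring c₁) (hs : Relation.ReflTransGen G.KempeStep c₁ c₂) :
    G.IsProperColoring c₂ := by
  induction hs with
  | refl => exact h1
  | tail _ h ih => exact kempe_proper_step G ih h
lemma lift_step_blocked {V : Type*} (G : SimpleGraph V) (w : V) {q : ℕ}
    (D : V → Fin q) (a b : Fin q) (v₀ : {v : V | v ≠ w})
    (d₂ : {v : V | v ≠ w} → Fin q)
    (hr : ∀ v, ((G.induce {v : V | v ≠ w}).kempeGraph (fun x => D ↑x) a b).Reachable v₀ v →
      d₂ v = Equiv.swap a b (D ↑v))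
    (hnr : ∀ v, ¬ ((G.induce {v : V | v ≠ w}).kempeGraph (fun x => D ↑x) a b).Reachable v₀ v →
      d₂ v = D ↑v)
    (hblock : ∀ v (hv : v ≠ w), (G.kempeGraph D a b).Adj w v →
      ¬ ((G.induce {v : V | v ≠ w}).kempeGraph (fun x => D ↑x) a b).Reachable v₀ ⟨v, hv⟩) :
    ∃ D₂ : V → Fin q, (∀ v : {v : V | v ≠ w}, D₂ ↑v = d₂ v) ∧ G.KempeStep D D₂ := by
  classical
  have hA : ∀ v, (G.kempeGraph D a b).Reachable ↑v₀ v →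
      ∃ hv : v ≠ w, ((G.induce {v : V | v ≠ w}).kempeGraph (fun x => D ↑x) a b).Reachable v₀ ⟨v, hv⟩ := by
    intro v hv
    rw [SimpleGraph.reachable_iff_reflTransGen] at hv
    induction hv with
    | refl => exact ⟨v₀.2, SimpleGraph.Reachable.refl _⟩
    | @tail x y hx hxy ih =>
      obtain ⟨hxw, hxr⟩ := ih
      by_cases hyw : y = w
      · subst hyw
        exact absurd hxr (hblock x hxw hxy.symm)
      · exact ⟨hyw, hxr.trans (SimpleGraph.Adj.reachable
          ((kempe_induce_adj G D a b _ ⟨x, hxw⟩ ⟨y, hyw⟩).2 hxy))⟩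
  refine ⟨fun v => if hv : v = w then D w else d₂ ⟨v, hv⟩, ?_, a, b, ↑v₀, ?_, ?_⟩
  · intro v
    beta_reduce; rw [dif_neg v.2]
  · intro v hv
    obtain ⟨hvw, hvr⟩ := hA v hv
    beta_reduce; rw [dif_neg hvw, hr ⟨v, hvw⟩ hvr]
  · intro v hv
    by_cases hvw : v = w
    · subst hvw; beta_reduce; rw [dif_pos rfl]
    · beta_reduce; rw [dif_neg hvw, hnr ⟨v, hvw⟩ (fun hc => hv (kempe_induce_reach G D a b _ hc))]

lemma lift_step_through {V : Type*} (G : SimpleGraph V) (w : V) {q : ℕ}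
    (D : V → Fin q) (a b : Fin q) (v₀ : {v : V | v ≠ w})
    (d₂ : {v : V | v ≠ w} → Fin q)
    (hr : ∀ v, ((G.induce {v : V | v ≠ w}).kempeGraph (fun x => D ↑x) a b).Reachable v₀ v →
      d₂ v = Equiv.swap a b (D ↑v))
    (hnr : ∀ v, ¬ ((G.induce {v : V | v ≠ w}).kempeGraph (fun x => D ↑x) a b).Reachable v₀ v →
      d₂ v = D ↑v)
    (hthrough : ∀ v (hv : v ≠ w), (G.kempeGraph D a b).Adj w v →
      ((G.induce {v : V | v ≠ w}).kempeGraph (fun x => D ↑x) a b).Reachable v₀ ⟨v, hv⟩)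
    (hwr : (G.kempeGraph D a b).Reachable ↑v₀ w) :
    ∃ D₂ : V → Fin q, (∀ v : {v : V | v ≠ w}, D₂ ↑v = d₂ v) ∧ G.KempeStep D D₂ := by
  classical
  have hB : ∀ v, (G.kempeGraph D a b).Reachable ↑v₀ v → v = w ∨
      ∃ hv : v ≠ w, ((G.induce {v : V | v ≠ w}).kempeGraph (fun x => D ↑x) a b).Reachable v₀ ⟨v, hv⟩ := by
    intro v hv
    rw [SimpleGraph.reachable_iff_reflTransGen] at hv
    induction hv with
    | refl => exact Or.inr ⟨v₀.2, SimpleGraph.Reachable.refl _⟩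
    | @tail x y hx hxy ih =>
      by_cases hyw : y = w
      · exact Or.inl hyw
      · refine Or.inr ⟨hyw, ?_⟩
        rcases ih with rfl | ⟨hxw, hxr⟩
        · exact hthrough y hyw hxy
        · exact hxr.trans (SimpleGraph.Adj.reachable
            ((kempe_induce_adj G D a b _ ⟨x, hxw⟩ ⟨y, hyw⟩).2 hxy))
  refine ⟨fun v => if hv : v = w then Equiv.swap a b (D w) else d₂ ⟨v, hv⟩, ?_, a, b, ↑v₀, ?_, ?_⟩
  · intro v
    beta_reduce; rw [dif_neg v.2]
  · intro v hv
    by_cases hvw : v = w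
    · subst hvw; beta_reduce; rw [dif_pos rfl]
    · rcases hB v hv with rfl | ⟨hvw', hvr⟩
      · exact absurd rfl hvw
      · beta_reduce; rw [dif_neg hvw, hr ⟨v, hvw'⟩ hvr]
  · intro v hv
    have hvw : v ≠ w := by rintro rfl; exact hv hwr
    beta_reduce; rw [dif_neg hvw, hnr ⟨v, hvw⟩ (fun hc => hv (kempe_induce_reach G D a b _ hc))]
lemma lift_kempe_step {V : Type*} [Fintype V] (G : SimpleGraph V) [DecidableRel G.Adj]
    (w : V) {q : ℕ} (hdeg : G.degree w < q)
    (D : V → Fin q) (hD : G.IsProperColoring D)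
    (d₂ : {v : V | v ≠ w} → Fin q)
    (hs : (G.induce {v : V | v ≠ w}).KempeStep (fun v => D ↑v) d₂) :
    ∃ D₂ : V → Fin q, (∀ v : {v : V | v ≠ w}, D₂ ↑v = d₂ v) ∧
      Relation.ReflTransGen G.KempeStep D D₂ := by
  classical
  obtain ⟨a, b, v₀, hr, hnr⟩ := hs
  by_cases hab : a = b
  · subst hab
    refine ⟨D, fun v => ?_, Relation.ReflTransGen.refl⟩
    by_cases hv : ((G.induce {v : V | v ≠ w}).kempeGraph (fun x => D ↑x) a a).Reachable v₀ v
    · rw [hr v hv]; simp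
    · rw [hnr v hv]
  have hq2 : 2 ≤ q := by
    have h1 : 1 < Fintype.card (Fin q) := Fintype.one_lt_card_iff.2 ⟨a, b, hab⟩
    simp at h1; omega
  by_cases hiso : ∀ v, ¬ (G.kempeGraph D a b).Adj w v
  · obtain ⟨D₂, h1, h2⟩ := lift_step_blocked G w D a b v₀ d₂ hr hnr
      (fun v hvw hadj => absurd hadj (hiso v))
    exact ⟨D₂, h1, Relation.ReflTransGen.single h2⟩
  push_neg at hiso
  obtain ⟨u₀, hu₀⟩ := hiso
  have hwab : D w = a ∨ D w = b := (kempeGraph_adj' hu₀).2.1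
  by_cases hfree : ∃ e : Fin q, e ≠ a ∧ e ≠ b ∧ ∀ u, G.Adj w u → D u ≠ e
  · obtain ⟨e, hea, heb, he⟩ := hfree
    have hstep1 : Relation.ReflTransGen G.KempeStep D (Function.update D w e) :=
      kempe_change_at G w D e (fun u hu => (hD hu).symm) he
    set D' := Function.update D w e with hD'def
    have hres : ∀ v : {v : V | v ≠ w}, D' ↑v = D ↑v := fun v => Function.update_of_ne v.2 e D
    have hfun : (fun v : {v : V | v ≠ w} => D' ↑v) = (fun v : {v : V | v ≠ w} => D ↑v) :=
      funext hres
    have hKeq : (G.induce {v : V | v ≠ w}).kempeGraph (fun x => D' ↑x) a b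
        = (G.induce {v : V | v ≠ w}).kempeGraph (fun x => D ↑x) a b := by rw [hfun]
    have hiso' : ∀ v, ¬ (G.kempeGraph D' a b).Adj w v := by
      intro v hv
      have hc := (kempeGraph_adj' hv).2.1
      rw [hD'def, Function.update_self] at hc
      rcases hc with hc | hc
      exacts [hea hc, heb hc]
    obtain ⟨D₂, h1, h2⟩ := lift_step_blocked G w D' a b v₀ d₂
      (fun v hv => by rw [hres v]; exact hr v (hKeq ▸ hv))
      (fun v hv => by rw [hres v]; exact hnr v (fun hc => hv (hKeq ▸ hc)))
      (fun v hvw hadj => absurd hadj (hiso' v))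
    exact ⟨D₂, h1, hstep1.trans (Relation.ReflTransGen.single h2)⟩
  · push_neg at hfree
    obtain ⟨y, hyDw, hclass, hrange⟩ : ∃ y : Fin q, y ≠ D w ∧
        (∀ z, (z = a ∨ z = b) → z ≠ D w → z = y) ∧
        (∀ e, e ≠ D w → e ≠ y → e ≠ a ∧ e ≠ b) := by
      rcases hwab with hwa | hwb
      · exact ⟨b, by rw [hwa]; exact Ne.symm hab,
          fun z hz hzw => by rw [hwa] at hzw; tauto,
          fun e hew hey => by rw [hwa] at hew; exact ⟨hew, hey⟩⟩
      · exact ⟨a, by rw [hwb]; exact hab,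
          fun z hz hzw => by rw [hwb] at hzw; tauto,
          fun e hew hey => by rw [hwb] at hew; exact ⟨hey, hew⟩⟩
    have hP1 : ∀ v, (G.kempeGraph D a b).Adj w v → G.Adj w v ∧ D v = y := by
      intro v hv
      obtain ⟨hg, -, hvab⟩ := kempeGraph_adj' hv
      exact ⟨hg, hclass _ hvab (hD hg).symm⟩
    have huniq : ∀ v₁ v₂, (G.kempeGraph D a b).Adj w v₁ → (G.kempeGraph D a b).Adj w v₂ →
        v₁ = v₂ := by
      intro v₁ v₂ h1 h2
      by_contra hne
      obtain ⟨hg1, hc1⟩ := hP1 v₁ h1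
      obtain ⟨hg2, hc2⟩ := hP1 v₂ h2
      have hsub : Finset.univ.erase (D w) ⊆ ((G.neighborFinset w).erase v₂).image D := by
        intro e he
        obtain ⟨heDw, -⟩ := Finset.mem_erase.1 he
        rcases eq_or_ne e y with rfl | hey
        · exact Finset.mem_image.2 ⟨v₁, Finset.mem_erase.2
            ⟨hne, (G.mem_neighborFinset w v₁).2 hg1⟩, hc1⟩
        · obtain ⟨hea, heb⟩ := hrange e heDw hey
          obtain ⟨u₃, hu3a, hu3c⟩ := hfree e hea heb
          refine Finset.mem_image.2 ⟨u₃, Finset.mem_erase.2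
            ⟨fun hc => hey (by rw [← hu3c, hc, hc2]), (G.mem_neighborFinset w u₃).2 hu3a⟩, hu3c⟩
      have hcard1 : q - 1 ≤ ((G.neighborFinset w).erase v₂).card := by
        calc q - 1 = (Finset.univ.erase (D w)).card := by
              rw [Finset.card_erase_of_mem (Finset.mem_univ _), Finset.card_univ, Fintype.card_fin]
          _ ≤ (((G.neighborFinset w).erase v₂).image D).card := Finset.card_le_card hsub
          _ ≤ _ := Finset.card_image_le
      have hcard2 : ((G.neighborFinset w).erase v₂).card = G.degree w - 1 := by
        rw [Finset.card_erase_of_mem ((G.mem_neighborFinset w v₂).2 hg2)]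
        rfl
      omega
    have hu0w : u₀ ≠ w := hu₀.ne'
    by_cases hreach : ((G.induce {v : V | v ≠ w}).kempeGraph (fun x => D ↑x) a b).Reachable
        v₀ ⟨u₀, hu0w⟩
    · have hwr : (G.kempeGraph D a b).Reachable ↑v₀ w :=
        (kempe_induce_reach G D a b _ hreach).trans (SimpleGraph.Adj.reachable hu₀.symm)
      obtain ⟨D₂, h1, h2⟩ := lift_step_through G w D a b v₀ d₂ hr hnr
        (fun v hvw hadj => by
          rw [show (⟨v, hvw⟩ : {v : V | v ≠ w}) = ⟨u₀, hu0w⟩ from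
            Subtype.ext (huniq v u₀ hadj hu₀)]
          exact hreach) hwr
      exact ⟨D₂, h1, Relation.ReflTransGen.single h2⟩
    · obtain ⟨D₂, h1, h2⟩ := lift_step_blocked G w D a b v₀ d₂ hr hnr
        (fun v hvw hadj => by
          rw [show (⟨v, hvw⟩ : {v : V | v ≠ w}) = ⟨u₀, hu0w⟩ from
            Subtype.ext (huniq v u₀ hadj hu₀)]
          exact hreach)
      exact ⟨D₂, h1, Relation.ReflTransGen.single h2⟩
theorem lasVergnas_meyniel {V : Type*} [Fintype V]
    (G : SimpleGraph V) [DecidableRel G.Adj] (w : V) (q : ℕ)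
    (hdeg : G.degree w < q)
    (h : ∀ c₁ c₂ : {v : V | v ≠ w} → Fin q,
      (G.induce {v : V | v ≠ w}).IsProperColoring c₁ →
      (G.induce {v : V | v ≠ w}).IsProperColoring c₂ →
      (G.induce {v : V | v ≠ w}).KempeEquiv c₁ c₂) :
    ∀ c₁ c₂ : V → Fin q, G.IsProperColoring c₁ → G.IsProperColoring c₂ →
      G.KempeEquiv c₁ c₂ := by
  classical
  intro c₁ c₂ h1 h2
  have hr1 : (G.induce {v : V | v ≠ w}).IsProperColoring (fun v => c₁ ↑v) :=
    fun u v huv => h1 huv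
  have hr2 : (G.induce {v : V | v ≠ w}).IsProperColoring (fun v => c₂ ↑v) :=
    fun u v huv => h2 huv
  have hchain : Relation.ReflTransGen (G.induce {v : V | v ≠ w}).KempeStep
      (fun v => c₁ ↑v) (fun v => c₂ ↑v) := h _ _ hr1 hr2
  have key : ∀ d : {v : V | v ≠ w} → Fin q,
      Relation.ReflTransGen (G.induce {v : V | v ≠ w}).KempeStep (fun v => c₁ ↑v) d →
      ∃ D : V → Fin q, (∀ v : {v : V | v ≠ w}, D ↑v = d v) ∧
        G.IsProperColoring D ∧ Relation.ReflTransGen G.KempeStep c₁ D := by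
    intro d hchain
    induction hchain with
    | refl => exact ⟨c₁, fun v => rfl, h1, Relation.ReflTransGen.refl⟩
    | @tail d d' hd hstep ih =>
      obtain ⟨D, hDr, hDp, hDe⟩ := ih
      have hb : (fun v : {v : V | v ≠ w} => D ↑v) = d := funext hDr
      obtain ⟨D₂, h2r, h2e⟩ := lift_kempe_step G w hdeg D hDp d' (by rw [hb]; exact hstep)
      exact ⟨D₂, h2r, kempe_proper_equiv G hDp h2e, hDe.trans h2e⟩
  obtain ⟨D, hDr, hDp, hDe⟩ := key _ hchain
  · 
    have hfin : Relation.ReflTransGen G.KempeStep D (Function.update D w (c₂ w)) :=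
      kempe_change_at G w D (c₂ w)
        (fun u hu => (hDp hu).symm)
        (fun u hu => by
          rw [hDr ⟨u, hu.ne'⟩]
          exact (h2 hu).symm)
    have heq : Function.update D w (c₂ w) = c₂ := by
      funext v
      by_cases hv : v = w
      · subst hv; rw [Function.update_self]
      · rw [Function.update_of_ne hv]
        exact hDr ⟨v, hv⟩
    exact hDe.trans (heq ▸ hfin)
end

section
/- If G is a bipartite graph, then for every q ≥ 2 all proper q-colourings of G are Kempe equivalent. -/
open SimpleGraph

variable {V : Type*}

section Aux

variable {V : Type*}

lemma swap_mem_pair {q : ℕ} (a b x : Fin q) :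
    (Equiv.swap a b x = a ∨ Equiv.swap a b x = b) ↔ (x = a ∨ x = b) := by
  constructor <;> intro h <;> rcases h with h | h
  · right
    have := congrArg (Equiv.swap a b) h
    rwa [Equiv.swap_apply_self, Equiv.swap_apply_left] at this
  · left
    have := congrArg (Equiv.swap a b) h
    rwa [Equiv.swap_apply_self, Equiv.swap_apply_right] at this
  · rw [h, Equiv.swap_apply_left]; tauto
  · rw [h, Equiv.swap_apply_right]; tauto

lemma kempeGraph_congr (G : SimpleGraph V) {q : ℕ} (c c' : V → Fin q) (a b : Fin q)
    (h : ∀ v, (c' v = a ∨ c' v = b) ↔ (c v = a ∨ c v = b)) :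
    G.kempeGraph c' a b = G.kempeGraph c a b := by
  ext u v
  simp only [SimpleGraph.kempeGraph, SimpleGraph.fromRel_adj]
  rw [h u, h v]

lemma kempeStep_symm (G : SimpleGraph V) {q : ℕ} {c c' : V → Fin q}
    (h : G.KempeStep c c') : G.KempeStep c' c := by
  obtain ⟨a, b, v₀, h1, h2⟩ := h
  have hmem : ∀ v, (c' v = a ∨ c' v = b) ↔ (c v = a ∨ c v = b) := by
    intro v
    by_cases hv : (G.kempeGraph c a b).Reachable v₀ v
    · rw [h1 v hv]; exact swap_mem_pair a b (c v)
    · rw [h2 v hv]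
  have hg : G.kempeGraph c' a b = G.kempeGraph c a b := kempeGraph_congr G c c' a b hmem
  refine ⟨a, b, v₀, ?_, ?_⟩ <;> intro v hv <;> rw [hg] at hv
  · rw [h1 v hv, Equiv.swap_apply_self]
  · rw [h2 v hv]

end Aux

open Classical in
lemma toCanonical {V : Type*} [Finite V] (G : SimpleGraph V) {q : ℕ} (s : Set V)
    (hs : ∀ ⦃u v : V⦄, G.Adj u v → (u ∈ s ↔ v ∉ s)) (c0 c1 : Fin q) (h01 : c0 ≠ c1)
    (c : V → Fin q) (hc : G.IsProperColoring c) :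
    G.KempeEquiv c (fun v => if v ∈ s then c0 else c1) := by
  set cstar : V → Fin q := fun v => if v ∈ s then c0 else c1 with hcstar
  have hcstar_mem : ∀ u : V, cstar u = c0 ∨ cstar u = c1 := by
    intro u; simp only [hcstar]; split <;> tauto
  have hcstar_adj : ∀ ⦃u w : V⦄, G.Adj u w → cstar u ≠ cstar w := by
    intro u w hadj
    have := hs hadj
    by_cases hu : u ∈ s
    · have hw : w ∉ s := this.mp hu
      simp only [hcstar, if_pos hu, if_neg hw]; exact h01
    · have hw : w ∈ s := by by_contra hw; exact hu (this.mpr hw)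
      simp only [hcstar, if_neg hu, if_pos hw]; exact h01.symm
  have two : ∀ x y z : Fin q, (x = c0 ∨ x = c1) → (y = c0 ∨ y = c1) → (z = c0 ∨ z = c1) →
      x ≠ y → x ≠ z → y = z := by
    intro x y z hx hy hz hxy hxz
    rcases hx with hx | hx <;> rcases hy with hy | hy <;> rcases hz with hz | hz <;> simp_all
  suffices H : ∀ n : ℕ, ∀ c : V → Fin q, G.IsProperColoring c →
      {v | c v ≠ cstar v}.ncard ≤ n → G.KempeEquiv c cstar by
    exact H _ c hc le_rfl
  intro n
  induction n with
  | zero =>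
    intro c hc hn
    have hempty : {v | c v ≠ cstar v} = ∅ := by
      rw [← Set.ncard_eq_zero (Set.toFinite _)] at *
      omega
    have : c = cstar := by
      funext v
      by_contra h
      exact absurd hempty (Set.nonempty_iff_ne_empty.mp ⟨v, h⟩)
    rw [this]
    exact Relation.ReflTransGen.refl
  | succ n ih =>
    intro c hc hn
    by_cases h0 : {v | c v ≠ cstar v} = ∅
    · have : c = cstar := by
        funext v
        by_contra h
        exact absurd h0 (Set.nonempty_iff_ne_empty.mp ⟨v, h⟩)
      rw [this]
      exact Relation.ReflTransGen.refl
    · obtain ⟨v, hv⟩ := Set.nonempty_iff_ne_empty.mpr h0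
      have hv : c v ≠ cstar v := hv
      set a := c v with ha
      set b := cstar v with hb
      set K := G.kempeGraph c a b with hK
      have hKadj : ∀ {u w : V}, K.Adj u w →
          G.Adj u w ∧ (c u = a ∨ c u = b) ∧ (c w = a ∨ c w = b) := by
        intro u w h
        rw [hK, SimpleGraph.kempeGraph, SimpleGraph.fromRel_adj] at h
        obtain ⟨-, h | h⟩ := h
        · exact ⟨h.1, h.2.1, h.2.2⟩
        · exact ⟨h.1.symm, h.2.2, h.2.1⟩
      -- the key invariant along Kempe components
      have step : ∀ u w : V, K.Adj u w →
          ((c u = a ∧ cstar u = b) ∨ (c u = b ∧ cstar u ≠ b)) →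
          ((c w = a ∧ cstar w = b) ∨ (c w = b ∧ cstar w ≠ b)) := by
        intro u w hadj hPu
        obtain ⟨hG, hcu, hcw⟩ := hKadj hadj
        have hne : c u ≠ c w := hc hG
        have hstar : cstar u ≠ cstar w := hcstar_adj hG
        have hbmem : b = c0 ∨ b = c1 := hcstar_mem v
        rcases hPu with ⟨h1, h2⟩ | ⟨h1, h2⟩
        · right
          constructor
          · rcases hcw with h | h
            · exact absurd (h1.trans h.symm) hne
            · exact h
          · rw [← h2]; exact hstar.symm
        · left
          constructor
          · rcases hcw with h | h
            · exact h
            · exact absurd (h1.trans h.symm) hne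
          · exact two (cstar u) (cstar w) b (hcstar_mem u) (hcstar_mem w) hbmem hstar h2
      have invWalk : ∀ (x z : V) (p : K.Walk x z),
          ((c x = a ∧ cstar x = b) ∨ (c x = b ∧ cstar x ≠ b)) →
          ((c z = a ∧ cstar z = b) ∨ (c z = b ∧ cstar z ≠ b)) := by
        intro x z p
        induction p with
        | nil => exact id
        | @cons x' y' z' h p ihp => exact fun hx => ihp (step x' y' h hx)
      have inv : ∀ u : V, K.Reachable v u →
          ((c u = a ∧ cstar u = b) ∨ (c u = b ∧ cstar u ≠ b)) := by
        intro u hu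
        obtain ⟨p⟩ := hu
        exact invWalk v u p (Or.inl ⟨ha.symm, hb.symm⟩)
      set c' : V → Fin q := fun u => if K.Reachable v u then Equiv.swap a b (c u) else c u
        with hc'def
      have hstep : G.KempeStep c c' := by
        refine ⟨a, b, v, ?_, ?_⟩ <;> intro u hu <;> simp only [hc'def]
        · rw [if_pos hu]
        · rw [if_neg hu]
      have hc'reach : ∀ u, K.Reachable v u → c' u = Equiv.swap a b (c u) := by
        intro u hu; simp only [hc'def, if_pos hu]
      have hc'not : ∀ u, ¬ K.Reachable v u → c' u = c u := by
        intro u hu; simp only [hc'def, if_neg hu]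
      have hcross : ∀ u w : V, G.Adj u w → K.Reachable v u → ¬ K.Reachable v w →
          ¬ (c w = a ∨ c w = b) := by
        intro u w hadj hu hw hcw
        have hu' := inv u hu
        have hcu : c u = a ∨ c u = b := by tauto
        have : K.Adj u w := by
          rw [hK, SimpleGraph.kempeGraph, SimpleGraph.fromRel_adj]
          exact ⟨hadj.ne, Or.inl ⟨hadj, hcu, hcw⟩⟩
        exact hw (hu.trans this.reachable)
      have hc'proper : G.IsProperColoring c' := by
        intro u w hadj
        by_cases hu : K.Reachable v u <;> by_cases hw : K.Reachable v w
        · rw [hc'reach u hu, hc'reach w hw]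
          exact fun h => hc hadj ((Equiv.swap a b).injective h)
        · rw [hc'reach u hu, hc'not w hw]
          have hcu : c u = a ∨ c u = b := by have := inv u hu; tauto
          have h1 : Equiv.swap a b (c u) = a ∨ Equiv.swap a b (c u) = b :=
            (swap_mem_pair a b (c u)).mpr hcu
          have h2 := hcross u w hadj hu hw
          intro h; rw [h] at h1; exact h2 h1
        · rw [hc'not u hu, hc'reach w hw]
          have hcw : c w = a ∨ c w = b := by have := inv w hw; tauto
          have h1 : Equiv.swap a b (c w) = a ∨ Equiv.swap a b (c w) = b :=
            (swap_mem_pair a b (c w)).mpr hcw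
          have h2 := hcross w u hadj.symm hw hu
          intro h; rw [← h] at h1; exact h2 h1
        · rw [hc'not u hu, hc'not w hw]; exact hc hadj
      have hvfixed : c' v = cstar v := by
        rw [hc'reach v (SimpleGraph.Reachable.refl v), ← ha, Equiv.swap_apply_left, hb]
      have hsub : {u | c' u ≠ cstar u} ⊆ {u | c u ≠ cstar u} := by
        intro u hu
        simp only [Set.mem_setOf_eq] at *
        by_cases hr : K.Reachable v u
        · rcases inv u hr with ⟨h1, h2⟩ | ⟨h1, h2⟩
          · exfalso; apply hu; rw [hc'reach u hr, h1, Equiv.swap_apply_left, h2]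
          · rw [h1]; exact fun h => h2 h.symm
        · rwa [hc'not u hr] at hu
      have hss : {u | c' u ≠ cstar u} ⊂ {u | c u ≠ cstar u} := by
        refine ⟨hsub, fun h => ?_⟩
        have := h hv
        simp only [Set.mem_setOf_eq] at this
        exact this hvfixed
      have hlt : {u | c' u ≠ cstar u}.ncard < {u | c u ≠ cstar u}.ncard :=
        Set.ncard_lt_ncard hss (Set.toFinite _)
      exact Relation.ReflTransGen.head hstep (ih c' hc'proper (by omega))

theorem bipartite_kempeEquiv {V : Type*} [Finite V]
    (G : SimpleGraph V)
    (hbip : ∃ s : Set V, ∀ ⦃u v : V⦄, G.Adj u v → (u ∈ s ↔ v ∉ s)) :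
    ∀ q : ℕ, 2 ≤ q →
      ∀ c₁ c₂ : V → Fin q, G.IsProperColoring c₁ → G.IsProperColoring c₂ →
        G.KempeEquiv c₁ c₂ := by
  intro q hq c₁ c₂ h₁ h₂
  obtain ⟨s, hs⟩ := hbip
  have h01 : (⟨0, by omega⟩ : Fin q) ≠ ⟨1, by omega⟩ := by simp [Fin.ext_iff]
  have e1 := toCanonical G s hs _ _ h01 c₁ h₁
  have e2 := toCanonical G s hs _ _ h01 c₂ h₂
  exact e1.trans ((@Relation.ReflTransGen.symmetric _ _ ⟨fun _ _ h => kempeStep_symm G h⟩).symm _ _ e2)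
end
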